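/- Let B₁, B₂ be Hermitian n×n complex matrices and let J₃ be the 3×3 Jordan block with zero eigenvalues, with Re(J₃) = (J₃ + J₃ᴴ)/2 and Im(J₃) = (J₃ − J₃ᴴ)/(2i). Then I_n ⊗ I₃ + B₁ ⊗ Re(J₃) + B₂ ⊗ Im(J₃) is positive semidefinite if and only if B₁² + B₂² ≤ 2·I_n. -/

import Mathlib

open Matrix Kronecker
open scoped ComplexOrder

/-- The 3×3 Jordan block with zero eigenvalues. -/
def J₃ : Matrix (Fin 3) (Fin 3) ℂ := !![0, 1, 0; 0, 0, 1; 0, 0, 0]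

namespace SJ3Aux

def E (a b : Fin 3) : Matrix (Fin 3) (Fin 3) ℂ := Matrix.single a b 1

lemma E_mul (a b c d : Fin 3) : E a b * E c d = if b = c then E a d else 0 := by
  unfold E
  split
  · subst ‹b = c›; rw [single_mul_single_same, one_mul]
  · exact single_mul_single_of_ne (h := ‹b ≠ c›) ..

lemma E_conjT (a b : Fin 3) : (E a b)ᴴ = E b a := by
  ext i j
  simp [E, Matrix.single, conjTranspose_apply, and_comm]

lemma kronecker_conjT {n : ℕ} (A : Matrix (Fin n) (Fin n) ℂ) (B : Matrix (Fin 3) (Fin 3) ℂ) :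
    (A ⊗ₖ B)ᴴ = Aᴴ ⊗ₖ Bᴴ := by
  ext ⟨i,k⟩ ⟨j,l⟩
  simp [conjTranspose_apply, mul_comm]

lemma sub_kronecker {n : ℕ} (A B : Matrix (Fin n) (Fin n) ℂ) (C : Matrix (Fin 3) (Fin 3) ℂ) :
    (A - B) ⊗ₖ C = A ⊗ₖ C - B ⊗ₖ C := by
  ext ⟨i,k⟩ ⟨j,l⟩
  simp [sub_mul]

lemma kronecker_sub {n : ℕ} (A : Matrix (Fin n) (Fin n) ℂ) (B C : Matrix (Fin 3) (Fin 3) ℂ) :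
    A ⊗ₖ (B - C) = A ⊗ₖ B - A ⊗ₖ C := by
  ext ⟨i,k⟩ ⟨j,l⟩
  simp [mul_sub]

lemma one3_eq : (1 : Matrix (Fin 3) (Fin 3) ℂ) = E 0 0 + E 1 1 + E 2 2 := by
  ext i j
  fin_cases i <;> fin_cases j <;> simp [E, Matrix.single, Matrix.one_apply]

lemma J3_eq : J₃ = E 0 1 + E 1 2 := by
  ext i j
  fin_cases i <;> fin_cases j <;> simp [E, J₃, Matrix.single] <;> rfl

lemma J3_conjT : J₃ᴴ = E 1 0 + E 2 1 := by
  rw [J3_eq, conjTranspose_add, E_conjT, E_conjT]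

-- key structural identity
lemma keyA {n : ℕ} (D : Matrix (Fin n) (Fin n) ℂ) :
    (1 : Matrix (Fin n) (Fin n) ℂ) ⊗ₖ (1 : Matrix (Fin 3) (Fin 3) ℂ)
      + D ⊗ₖ J₃ + Dᴴ ⊗ₖ J₃ᴴ
    = ((1 : Matrix (Fin n) (Fin n) ℂ) ⊗ₖ E 0 0 + D ⊗ₖ E 0 1)ᴴ
        * ((1 : Matrix (Fin n) (Fin n) ℂ) ⊗ₖ E 0 0 + D ⊗ₖ E 0 1)
      + ((1 : Matrix (Fin n) (Fin n) ℂ) ⊗ₖ E 2 2 + Dᴴ ⊗ₖ E 2 1)ᴴ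
        * ((1 : Matrix (Fin n) (Fin n) ℂ) ⊗ₖ E 2 2 + Dᴴ ⊗ₖ E 2 1)
      + ((1 : Matrix (Fin n) (Fin n) ℂ) - Dᴴ * D - D * Dᴴ) ⊗ₖ E 1 1 := by
  have h1 : (1 : Matrix (Fin n × Fin 3) (Fin n × Fin 3) ℂ)
      = (1 : Matrix (Fin n) (Fin n) ℂ) ⊗ₖ E 0 0 + 1 ⊗ₖ E 1 1 + 1 ⊗ₖ E 2 2 := by
    rw [← kronecker_add, ← kronecker_add, ← one3_eq, one_kronecker_one]
  rw [J3_conjT, J3_eq]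
  simp only [conjTranspose_add, kronecker_conjT, E_conjT, conjTranspose_one,
    conjTranspose_conjTranspose, add_mul, mul_add, ← mul_kronecker_mul, E_mul,
    sub_kronecker, kronecker_add, add_kronecker, one_mul, mul_one]
  norm_num [kronecker_zero]
  rw [h1]
  abel

lemma keyB {n : ℕ} (D : Matrix (Fin n) (Fin n) ℂ) :
    ((1 : Matrix (Fin n) (Fin n) ℂ) ⊗ₖ E 1 1 - D ⊗ₖ E 0 1 - Dᴴ ⊗ₖ E 2 1)ᴴ
      * ((1 : Matrix (Fin n) (Fin n) ℂ) ⊗ₖ (1 : Matrix (Fin 3) (Fin 3) ℂ)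
          + D ⊗ₖ J₃ + Dᴴ ⊗ₖ J₃ᴴ)
      * ((1 : Matrix (Fin n) (Fin n) ℂ) ⊗ₖ E 1 1 - D ⊗ₖ E 0 1 - Dᴴ ⊗ₖ E 2 1)
    = ((1 : Matrix (Fin n) (Fin n) ℂ) - Dᴴ * D - D * Dᴴ) ⊗ₖ E 1 1 := by
  rw [J3_conjT, J3_eq]
  simp only [conjTranspose_sub, conjTranspose_add, kronecker_conjT, E_conjT, conjTranspose_one,
    conjTranspose_conjTranspose, add_mul, mul_add, sub_mul, mul_sub, one_kronecker_one,
    Matrix.one_mul, Matrix.mul_one, ← mul_kronecker_mul, E_mul,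
    sub_kronecker, kronecker_add, add_kronecker, one_mul, mul_one]
  norm_num [kronecker_zero]
  simp only [E_mul]
  norm_num [kronecker_zero]
  abel_nf
  simp [kronecker_zero]

lemma psd_smul {n : ℕ} {M : Matrix (Fin n) (Fin n) ℂ} (hM : M.PosSemidef) {c : ℂ}
    (hc : 0 ≤ c) : (c • M).PosSemidef := by
  have hcs : star c = c := by
    rw [Complex.star_def, Complex.conj_eq_iff_im]
    exact ((Complex.nonneg_iff).mp hc).2.symm
  constructor
  · rw [IsHermitian, conjTranspose_smul, hcs, hM.1.eq]
  · intro x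
    exact (hM.smul hc).2 x

end SJ3Aux

open SJ3Aux in
theorem selfadjoint_structure_J3 {n : ℕ} (B₁ B₂ : Matrix (Fin n) (Fin n) ℂ)
    (h₁ : B₁.IsHermitian) (h₂ : B₂.IsHermitian) :
    ((1 : Matrix (Fin n) (Fin n) ℂ) ⊗ₖ (1 : Matrix (Fin 3) (Fin 3) ℂ)
        + B₁ ⊗ₖ ((2 : ℂ)⁻¹ • (J₃ + J₃ᴴ))
        + B₂ ⊗ₖ ((2 * Complex.I)⁻¹ • (J₃ - J₃ᴴ))).PosSemidef ↔
      ((2 : ℂ) • (1 : Matrix (Fin n) (Fin n) ℂ) - (B₁ * B₁ + B₂ * B₂)).PosSemidef := by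
  set D : Matrix (Fin n) (Fin n) ℂ := (2:ℂ)⁻¹ • (B₁ - Complex.I • B₂) with hD
  have hDH : Dᴴ = (2:ℂ)⁻¹ • (B₁ + Complex.I • B₂) := by
    rw [hD, conjTranspose_smul, conjTranspose_sub, conjTranspose_smul, h₁.eq, h₂.eq]
    simp [Complex.star_def, Complex.conj_I, sub_neg_eq_add]
  set S : Matrix (Fin n) (Fin n) ℂ := 1 - Dᴴ * D - D * Dᴴ with hSdef
  have hiI : ((2:ℂ) * Complex.I)⁻¹ = -((2:ℂ)⁻¹) * Complex.I := by
    rw [mul_inv, Complex.inv_I]; ring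
  have hM : (1 : Matrix (Fin n) (Fin n) ℂ) ⊗ₖ (1 : Matrix (Fin 3) (Fin 3) ℂ)
        + B₁ ⊗ₖ ((2 : ℂ)⁻¹ • (J₃ + J₃ᴴ))
        + B₂ ⊗ₖ ((2 * Complex.I)⁻¹ • (J₃ - J₃ᴴ))
      = 1 ⊗ₖ 1 + D ⊗ₖ J₃ + Dᴴ ⊗ₖ J₃ᴴ := by
    rw [hiI, hD, hDH]
    simp only [kronecker_smul, smul_kronecker, kronecker_add, kronecker_sub,
      add_kronecker, sub_kronecker, smul_sub, smul_add]
    module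
  have hS : (2 : ℂ) • (1 : Matrix (Fin n) (Fin n) ℂ) - (B₁ * B₁ + B₂ * B₂)
      = (2:ℂ) • S := by
    rw [hSdef, hD, hDH]
    simp only [smul_mul_assoc, mul_smul_comm, sub_mul, mul_sub, add_mul, mul_add,
      smul_sub, smul_add, smul_smul]
    match_scalars <;> simp [Complex.ext_iff] <;> ring
  rw [hM, hS]
  constructor
  · intro h
    have h2 := h.conjTranspose_mul_mul_same
      ((1 : Matrix (Fin n) (Fin n) ℂ) ⊗ₖ E 1 1 - D ⊗ₖ E 0 1 - Dᴴ ⊗ₖ E 2 1)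
    rw [keyB] at h2
    have h3 := h2.submatrix (fun i : Fin n => ((i, 1) : Fin n × Fin 3))
    have h4 : (S ⊗ₖ E 1 1).submatrix (fun i : Fin n => ((i, 1) : Fin n × Fin 3))
        (fun i : Fin n => ((i, 1) : Fin n × Fin 3)) = S := by
      ext i j
      simp [submatrix_apply, kroneckerMap_apply, E, Matrix.single]
    rw [h4] at h3
    rw [two_smul]
    exact h3.add h3
  · intro h
    have hSpsd : S.PosSemidef := by
      have := psd_smul h (c := (2:ℂ)⁻¹) (by
        rw [Complex.nonneg_iff]; norm_num)
      rwa [smul_smul, inv_mul_cancel₀ (by norm_num), one_smul] at this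
    obtain ⟨R, hR⟩ : ∃ R : Matrix (Fin n) (Fin n) ℂ, S = Rᴴ * R := by
      open scoped MatrixOrder in exact CStarAlgebra.nonneg_iff_eq_star_mul_self.mp hSpsd.nonneg
    have hSE : (S ⊗ₖ E 1 1).PosSemidef := by
      have : S ⊗ₖ E 1 1 = (R ⊗ₖ E 1 1)ᴴ * (R ⊗ₖ E 1 1) := by
        rw [kronecker_conjT, E_conjT, ← mul_kronecker_mul, ← hR, E_mul]
        simp
      rw [this]
      exact posSemidef_conjTranspose_mul_self _
    rw [keyA D]
    exact ((posSemidef_conjTranspose_mul_self _).add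
      (posSemidef_conjTranspose_mul_self _)).add hSE
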